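/- arXiv:1410.4300 — 6 statements merged into one kernel-verified Lean document; each statement's English description precedes it below -/
import Mathlib

section
/- Let f : 𝔻 → ℂ be holomorphic with f(0) = 1, Re f > 0 on 𝔻, and Taylor expansion f(z) = 1 + ∑_{n≥1} aₙ zⁿ. Then |aₙ| ≤ 2 for every n ≥ 1. -/
open Complex Metric Real Set

lemma cara_key (f : ℂ → ℂ)
    (hf : DifferentiableOn ℂ f (ball 0 1)) (h0 : f 0 = 1)
    (hre : ∀ z ∈ ball (0 : ℂ) 1, 0 < (f z).re) (n : ℕ) (hn : 1 ≤ n)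
    {r : ℝ} (hr0 : 0 < r) (hr1 : r < 1) :
    ‖iteratedDeriv n f 0 / (n.factorial : ℂ)‖ * r ^ n ≤ 2 := by
  have hsub : closedBall (0:ℂ) r ⊆ ball 0 1 := closedBall_subset_ball hr1
  have hd : DifferentiableOn ℂ f (closedBall 0 r) := hf.mono hsub
  have hc : ContinuousOn f (closedBall (0:ℂ) r) := hd.continuousOn
  have hda : ∀ z ∈ ball (0:ℂ) r \ (∅ : Set ℂ), DifferentiableAt ℂ f z := fun z hz =>
    hf.differentiableAt (isOpen_ball.mem_nhds (ball_subset_ball hr1.le hz.1))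
  set Z : ℝ → ℂ := circleMap 0 r with hZdef
  have hZ : ∀ θ, Z θ ≠ 0 := fun θ => circleMap_ne_center hr0.ne'
  have hZabs : ∀ θ, ‖Z θ‖ = r := fun θ => by
    rw [hZdef, norm_circleMap_zero, abs_of_pos hr0]
  have hZmem : ∀ θ, Z θ ∈ ball (0:ℂ) 1 := fun θ =>
    hsub (sphere_subset_closedBall (circleMap_mem_sphere 0 hr0.le θ))
  have hFc : Continuous fun θ => f (Z θ) :=
    (hc.mono sphere_subset_closedBall).comp_continuous (continuous_circleMap 0 r)
      (fun θ => circleMap_mem_sphere 0 hr0.le θ)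
  have hZc : Continuous Z := continuous_circleMap 0 r
  have hZinvc : Continuous fun θ => (Z θ)⁻¹ := hZc.inv₀ hZ
  -- mean value (n = 0 Cauchy formula)
  have E4 : (∫ θ in (0:ℝ)..2*π, f (Z θ)) = 2 * π := by
    have h4 := circleIntegral_sub_inv_smul_of_differentiable_on_off_countable
      countable_empty (mem_ball_self hr0) hc hda
    simp only [circleIntegral, deriv_circleMap, sub_zero, smul_eq_mul, h0, mul_one] at h4
    rw [intervalIntegral.integral_congr
        (g := fun θ => I * f (Z θ))
        (fun θ _ => by rw [← hZdef, mul_comm (Z θ) I, mul_assoc, mul_inv_cancel_left₀ (hZ θ)]),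
      intervalIntegral.integral_const_mul] at h4
    have := mul_left_cancel₀ I_ne_zero (by rw [h4]; ring : I * ∫ θ in (0:ℝ)..2*π, f (Z θ) = I * (2 * π))
    exact_mod_cast this
  -- vanishing of positive-index conjugate coefficients
  have E2 : (∫ θ in (0:ℝ)..2*π, (Z θ) ^ n * f (Z θ)) = 0 := by
    have hgd : ∀ z ∈ ball (0:ℂ) r \ (∅ : Set ℂ), DifferentiableAt ℂ (fun z => z ^ (n-1) * f z) z :=
      fun z hz => (differentiableAt_pow _).mul (hda z hz)
    have hgc : ContinuousOn (fun z : ℂ => z ^ (n-1) * f z) (closedBall 0 r) :=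
      (continuous_pow _).continuousOn.mul hc
    have h2 := circleIntegral_eq_zero_of_differentiable_on_off_countable hr0.le
      countable_empty hgc hgd
    simp only [circleIntegral, deriv_circleMap, smul_eq_mul] at h2
    rw [intervalIntegral.integral_congr
        (g := fun θ => I * ((Z θ) ^ n * f (Z θ)))
        (fun θ _ => by
          rw [← hZdef]
          show Z θ * I * (Z θ ^ (n-1) * f (Z θ)) = I * (Z θ ^ n * f (Z θ))
          have hzz : Z θ ^ n = Z θ ^ (n-1) * Z θ := by
            rw [← pow_succ]; congr 1; omega
          rw [hzz]; ring),
      intervalIntegral.integral_const_mul] at h2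
    exact (mul_eq_zero.mp h2).resolve_left I_ne_zero
  have hint1 : IntervalIntegrable (fun θ => (Z θ)⁻¹ ^ n * f (Z θ)) MeasureTheory.volume 0 (2*π) :=
    ((hZinvc.pow n).mul hFc).intervalIntegrable _ _
  have hint2 : IntervalIntegrable (fun θ => (Z θ)⁻¹ ^ n * (starRingEnd ℂ) (f (Z θ)))
      MeasureTheory.volume 0 (2*π) :=
    ((hZinvc.pow n).mul (Complex.continuous_conj.comp hFc)).intervalIntegrable _ _
  have hconjZ : ∀ θ, (starRingEnd ℂ) (Z θ) = (r:ℂ)^2 * (Z θ)⁻¹ := by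
    intro θ
    have h1 : Z θ * (starRingEnd ℂ) (Z θ) = (r:ℂ)^2 := by
      rw [Complex.mul_conj]
      rw [Complex.normSq_eq_norm_sq, hZabs θ]
      push_cast
      ring
    field_simp [hZ θ] at h1 ⊢
    linear_combination h1
  have E3 : (∫ θ in (0:ℝ)..2*π, (Z θ)⁻¹ ^ n * (starRingEnd ℂ) (f (Z θ))) = 0 := by
    have hconj := congrArg (starRingEnd ℂ) E2
    rw [map_zero] at hconj
    have hL : (∫ θ in (0:ℝ)..2*π, (starRingEnd ℂ) ((Z θ) ^ n * f (Z θ)))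
        = (starRingEnd ℂ) (∫ θ in (0:ℝ)..2*π, (Z θ) ^ n * f (Z θ)) := by
      have := (Complex.conjCLE.toContinuousLinearMap).intervalIntegral_comp_comm
        (((hZc.pow n).mul hFc).intervalIntegrable (μ := MeasureTheory.volume) 0 (2*π))
      simpa using this
    rw [hconj] at hL
    have hEq : ∀ θ, (starRingEnd ℂ) ((Z θ) ^ n * f (Z θ))
        = ((r:ℂ)^2)^n * ((Z θ)⁻¹ ^ n * (starRingEnd ℂ) (f (Z θ))) := by
      intro θ
      rw [map_mul, map_pow, hconjZ θ]
      ring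
    rw [intervalIntegral.integral_congr (fun θ _ => hEq θ),
      intervalIntegral.integral_const_mul] at hL
    have hr2n : ((r:ℂ)^2)^n ≠ 0 :=
      pow_ne_zero _ (pow_ne_zero _ (Complex.ofReal_ne_zero.mpr hr0.ne'))
    exact (mul_eq_zero.mp hL).resolve_left hr2n
  -- Cauchy coefficient formula
  have E1 : iteratedDeriv n f 0 / (n.factorial : ℂ)
      = (2 * (π:ℂ))⁻¹ * ∫ θ in (0:ℝ)..2*π, (Z θ)⁻¹ ^ n * f (Z θ) := by
    obtain ⟨R, hRr⟩ : ∃ R : NNReal, (R:ℝ) = r := ⟨⟨r, hr0.le⟩, rfl⟩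
    have hps : HasFPowerSeriesOnBall f (cauchyPowerSeries f 0 R) 0 R :=
      DifferentiableOn.hasFPowerSeriesOnBall (by rw [hRr]; exact hd)
        (by rw [← NNReal.coe_pos, hRr]; exact hr0)
    rw [hRr] at hps
    have hfs := hps.factorial_smul (1:ℂ) n
    have hiter : iteratedDeriv n f 0 = iteratedFDeriv ℂ n f 0 (fun _ => 1) :=
      iteratedDeriv_eq_iteratedFDeriv
    have hcoeff : iteratedDeriv n f 0 / (n.factorial : ℂ)
        = cauchyPowerSeries f 0 r n (fun _ => 1) := by
      rw [hiter, ← hfs, nsmul_eq_mul,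
        mul_div_cancel_left₀ _ (by exact_mod_cast n.factorial_ne_zero : (n.factorial:ℂ) ≠ 0)]
    rw [hcoeff, cauchyPowerSeries_apply]
    simp only [circleIntegral, deriv_circleMap, sub_zero, smul_eq_mul, one_div]
    rw [intervalIntegral.integral_congr
        (g := fun θ => I * ((Z θ)⁻¹ ^ n * f (Z θ)))
        (fun θ _ => by rw [← hZdef]; field_simp [hZ θ]),
      intervalIntegral.integral_const_mul, ← mul_assoc]
    congr 1
    have hπ : (π:ℂ) ≠ 0 := by exact_mod_cast Real.pi_ne_zero
    field_simp
  -- combine with real part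
  have E5 : iteratedDeriv n f 0 / (n.factorial : ℂ)
      = (2 * (π:ℂ))⁻¹ * ∫ θ in (0:ℝ)..2*π, (Z θ)⁻¹ ^ n * (2 * ((f (Z θ)).re : ℂ)) := by
    rw [E1]
    congr 1
    have : (∫ θ in (0:ℝ)..2*π, (Z θ)⁻¹ ^ n * (2 * ((f (Z θ)).re : ℂ)))
        = (∫ θ in (0:ℝ)..2*π, (Z θ)⁻¹ ^ n * f (Z θ))
          + ∫ θ in (0:ℝ)..2*π, (Z θ)⁻¹ ^ n * (starRingEnd ℂ) (f (Z θ)) := by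
      rw [← intervalIntegral.integral_add hint1 hint2]
      apply intervalIntegral.integral_congr
      intro θ _
      show (Z θ)⁻¹ ^ n * (2 * ((f (Z θ)).re : ℂ))
          = (Z θ)⁻¹ ^ n * f (Z θ) + (Z θ)⁻¹ ^ n * (starRingEnd ℂ) (f (Z θ))
      rw [← mul_add, Complex.add_conj]
      push_cast
      ring
    rw [this, E3, add_zero]
  -- mean value of the real part
  have E6 : (∫ θ in (0:ℝ)..2*π, (f (Z θ)).re) = 2 * π := by
    have := (Complex.reCLM).intervalIntegral_comp_comm
      (hFc.intervalIntegrable (μ := MeasureTheory.volume) 0 (2*π))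
    simp only [Complex.reCLM_apply] at this
    rw [this, E4]
    simp
  -- the estimate
  have hbound : ‖iteratedDeriv n f 0 / (n.factorial : ℂ)‖ ≤ 2 / r ^ n := by
    rw [E5]
    have h2π : (0:ℝ) < 2 * π := by positivity
    rw [norm_mul]
    have habsinv : ‖(2 * (π:ℂ))⁻¹‖ = (2*π)⁻¹ := by
      rw [norm_inv, norm_mul, Complex.norm_two, Complex.norm_real, Real.norm_eq_abs,
        abs_of_pos Real.pi_pos]
    rw [habsinv]
    have hnorm : ‖∫ θ in (0:ℝ)..2*π, (Z θ)⁻¹ ^ n * (2 * ((f (Z θ)).re : ℂ))‖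
        ≤ ∫ θ in (0:ℝ)..2*π, ‖(Z θ)⁻¹ ^ n * (2 * ((f (Z θ)).re : ℂ))‖ :=
      intervalIntegral.norm_integral_le_integral_norm h2π.le
    have hval : ∀ θ, ‖(Z θ)⁻¹ ^ n * (2 * ((f (Z θ)).re : ℂ))‖
        = (r ^ n)⁻¹ * (2 * (f (Z θ)).re) := by
      intro θ
      have h1 : ‖Z θ‖ = r := by rw [hZabs]
      have h2 : ‖(2 * ((f (Z θ)).re : ℂ))‖ = 2 * (f (Z θ)).re := by
        rw [norm_mul, Complex.norm_real, Real.norm_eq_abs,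
          abs_of_pos (hre _ (hZmem θ))]
        norm_num
      rw [norm_mul, norm_pow, norm_inv, h1, h2, inv_pow]
    have hIeq : (∫ θ in (0:ℝ)..2*π, ‖(Z θ)⁻¹ ^ n * (2 * ((f (Z θ)).re : ℂ))‖)
        = (r ^ n)⁻¹ * 2 * (2 * π) := by
      rw [intervalIntegral.integral_congr (g := fun θ => (r^n)⁻¹ * 2 * (f (Z θ)).re)
        (fun θ _ => by rw [hval θ]; ring)]
      rw [intervalIntegral.integral_const_mul, E6]
    calc (2*π)⁻¹ * ‖∫ θ in (0:ℝ)..2*π, (Z θ)⁻¹ ^ n * (2 * ((f (Z θ)).re : ℂ))‖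
        ≤ (2*π)⁻¹ * ((r ^ n)⁻¹ * 2 * (2 * π)) := by
          apply mul_le_mul_of_nonneg_left _ (by positivity)
          rw [← hIeq]
          exact hnorm
      _ = 2 / r ^ n := by field_simp
  have hrn : (0:ℝ) < r ^ n := by positivity
  calc ‖iteratedDeriv n f 0 / (n.factorial : ℂ)‖ * r ^ n
      ≤ (2 / r ^ n) * r ^ n := mul_le_mul_of_nonneg_right hbound hrn.le
    _ = 2 := by field_simp

theorem caratheodory_coeff_bound (f : ℂ → ℂ)
    (hf : DifferentiableOn ℂ f (ball 0 1)) (h0 : f 0 = 1)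
    (hre : ∀ z ∈ ball (0 : ℂ) 1, 0 < (f z).re) :
    ∀ n : ℕ, 1 ≤ n → ‖iteratedDeriv n f 0 / (n.factorial : ℂ)‖ ≤ 2 := by
  intro n hn
  set a := ‖iteratedDeriv n f 0 / (n.factorial : ℂ)‖ with ha
  have key : ∀ r ∈ Ioo (0:ℝ) 1, a * r ^ n ≤ 2 := fun r hr =>
    cara_key f hf h0 hre n hn hr.1 hr.2
  have htend : Filter.Tendsto (fun r : ℝ => a * r ^ n) (nhdsWithin 1 (Iio 1)) (nhds (a * 1 ^ n)) :=
    ((continuous_const.mul (continuous_pow n)).tendsto 1).mono_left nhdsWithin_le_nhds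
  have hmem : Ioo (0:ℝ) 1 ∈ nhdsWithin 1 (Iio 1) := Ioo_mem_nhdsLT (by norm_num)
  have hle : a * 1 ^ n ≤ 2 :=
    le_of_tendsto htend (Filter.eventually_iff_exists_mem.mpr ⟨Ioo 0 1, hmem, key⟩)
  simpa using hle
end

section
/- Let f : 𝔻 → ℂ be holomorphic with f(0) = 1 and Re f > 0 on 𝔻. If Re f(z₀) = (1 - |z₀|)/(1 + |z₀|) for some z₀ ≠ 0 in 𝔻, then there exists θ ∈ ℝ such that f(z) = (1 + e^{iθ} z)/(1 - e^{iθ} z) for all z ∈ 𝔻. -/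
open Complex Metric

theorem caratheodory_equality_case_re (f : ℂ → ℂ)
    (hf : DifferentiableOn ℂ f (ball 0 1)) (h0 : f 0 = 1)
    (hre : ∀ z ∈ ball (0 : ℂ) 1, 0 < (f z).re)
    (z₀ : ℂ) (hz₀ : z₀ ∈ ball (0 : ℂ) 1) (hz₀0 : z₀ ≠ 0)
    (heq : (f z₀).re = (1 - ‖z₀‖) / (1 + ‖z₀‖)) :
    ∃ θ : ℝ, ∀ z ∈ ball (0 : ℂ) 1,
      f z = (1 + Complex.exp (θ * Complex.I) * z) / (1 - Complex.exp (θ * Complex.I) * z) := by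
  set g : ℂ → ℂ := fun z => (f z - 1) / (f z + 1) with hg_def
  have hden : ∀ z ∈ ball (0 : ℂ) 1, f z + 1 ≠ 0 := by
    intro z hz h
    have h1 : (f z + 1).re = (f z).re + 1 := by simp
    rw [h] at h1
    simp at h1
    linarith [hre z hz]
  have hg_diff : DifferentiableOn ℂ g (ball 0 1) :=
    DifferentiableOn.div (hf.sub (differentiableOn_const 1))
      (hf.add (differentiableOn_const 1)) hden
  have hg0 : g 0 = 0 := by simp [hg_def, h0]
  have hlt : ∀ z ∈ ball (0 : ℂ) 1, ‖f z - 1‖ < ‖f z + 1‖ := by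
    intro z hz
    have h1 : Complex.normSq (f z - 1) < Complex.normSq (f z + 1) := by
      simp only [Complex.normSq_apply, Complex.sub_re, Complex.sub_im, Complex.add_re,
        Complex.add_im, Complex.one_re, Complex.one_im]
      nlinarith [hre z hz]
    have h2 := Complex.sq_norm (f z - 1)
    have h3 := Complex.sq_norm (f z + 1)
    nlinarith [norm_nonneg (f z - 1), norm_nonneg (f z + 1)]
  have habs : ∀ z ∈ ball (0 : ℂ) 1, ‖g z‖ < 1 := by
    intro z hz
    have hpos : 0 < ‖f z + 1‖ :=
      lt_of_le_of_lt (norm_nonneg _) (hlt z hz)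
    rw [hg_def]
    simp only [norm_div]
    rw [div_lt_one hpos]
    exact hlt z hz
  have hmaps : Set.MapsTo g (ball (0 : ℂ) 1) (ball (g 0) 1) := by
    intro z hz
    rw [hg0, mem_ball_zero_iff]
    exact habs z hz
  -- Schwarz inequality: |g z₀| ≤ |z₀|
  have hr : ‖z₀‖ < 1 := by simpa [mem_ball_zero_iff] using hz₀
  have hr0 : 0 < ‖z₀‖ := norm_pos_iff.mpr hz₀0
  have hschwarz : ‖g z₀‖ ≤ ‖z₀‖ := by
    have := Complex.norm_le_norm_of_mapsTo_ball hg_diff (by rw [hg0] at hmaps; exact hmaps.mono_right ball_subset_closedBall) hg0 hr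
    exact this
  -- f z₀ in terms of g z₀: f z₀ = (1 + g z₀)/(1 - g z₀)
  have hdz₀ : f z₀ + 1 ≠ 0 := hden z₀ hz₀
  set r : ℝ := ‖z₀‖ with hr_def
  set a : ℝ := (g z₀).re
  set b : ℝ := (g z₀).im
  have hS_le : a ^ 2 + b ^ 2 ≤ r ^ 2 := by
    have h1 : Complex.normSq (g z₀) ≤ r ^ 2 := by
      rw [← Complex.sq_norm]
      exact pow_le_pow_left₀ (norm_nonneg _) hschwarz 2
    simpa [Complex.normSq_apply, sq] using h1
  -- the key algebraic identity: Re f z₀ = (1 - |g z₀|²) / |1 - g z₀|²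
  have h1mg : (1 : ℂ) - g z₀ ≠ 0 := by
    intro h
    have : ‖g z₀‖ = 1 := by
      have : g z₀ = 1 := by linear_combination -h
      simp [this]
    linarith [lt_of_le_of_lt hschwarz hr]
  have hfz₀ : f z₀ = (1 + g z₀) / (1 - g z₀) := by
    rw [hg_def]
    field_simp
    ring
  have hre_formula : (f z₀).re * ((1 - a) ^ 2 + b ^ 2) = 1 - a ^ 2 - b ^ 2 := by
    have hd : Complex.normSq (1 - g z₀) = (1 - a) ^ 2 + b ^ 2 := by
      simp only [Complex.normSq_apply, Complex.sub_re, Complex.sub_im, Complex.one_re,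
        Complex.one_im]
      ring
    have hd0 : (0 : ℝ) < (1 - a) ^ 2 + b ^ 2 := by
      rw [← hd]; exact Complex.normSq_pos.2 h1mg
    rw [hfz₀, Complex.div_re, hd]
    simp only [Complex.add_re, Complex.add_im, Complex.sub_re, Complex.sub_im, Complex.one_re,
      Complex.one_im]
    field_simp
    ring
  have heq' : (f z₀).re * (1 + r) = 1 - r := by
    rw [heq]
    have h1r : (0:ℝ) < 1 + r := by linarith
    rw [div_mul_cancel₀ _ h1r.ne']
  -- deduce a = -r, b = 0
  have hkey : a ^ 2 + b ^ 2 = r + a * (1 - r) := by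
    have h1 : (1 - a ^ 2 - b ^ 2) * (1 + r) = (1 - r) * ((1 - a) ^ 2 + b ^ 2) := by
      have h2 : (f z₀).re * ((1 - a) ^ 2 + b ^ 2) * (1 + r) = (1 - a ^ 2 - b ^ 2) * (1 + r) := by
        rw [hre_formula]
      have h3 : (f z₀).re * (1 + r) * ((1 - a) ^ 2 + b ^ 2) = (1 - r) * ((1 - a) ^ 2 + b ^ 2) := by
        rw [heq']
      nlinarith [h2, h3]
    nlinarith [h1]
  have ha : a = -r := by
    have h1 : a ≤ -r := by nlinarith [sq_nonneg b]
    have h2 : -r ≤ a := by nlinarith [sq_nonneg b, sq_nonneg (a + r)]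
    linarith
  have hb : b = 0 := by nlinarith [sq_nonneg b]
  have hgz₀ : g z₀ = -(r : ℂ) := by
    apply Complex.ext
    · simpa using ha
    · simpa using hb
  -- Schwarz equality case
  have hdslope : ‖dslope g 0 z₀‖ = 1 / 1 := by
    rw [dslope_of_ne _ hz₀0, slope_def_field]
    rw [hg0, sub_zero, sub_zero]
    simp only [norm_div, hgz₀]
    simp [abs_of_pos hr0, div_self hr0.ne', hr_def, hz₀0]
  have heqon := Complex.affine_of_mapsTo_ball_of_exists_norm_dslope_eq_div hg_diff (hmaps.mono_right ball_subset_closedBall) hz₀ hdslope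
  set C : ℂ := dslope g 0 z₀ with hC_def
  have hCabs : ‖C‖ = 1 := by
    have := hdslope
    simpa using this
  refine ⟨Complex.arg C, ?_⟩
  have hCexp : Complex.exp ((Complex.arg C : ℂ) * Complex.I) = C := by
    have := Complex.norm_mul_exp_arg_mul_I C
    rw [hCabs] at this
    simpa using this
  intro z hz
  rw [hCexp]
  have hgz : g z = z * C := by
    have := heqon hz
    simpa [hg0] using this
  have hCz : (1 : ℂ) - C * z ≠ 0 := by
    intro h
    have h1 : C * z = 1 := by linear_combination -h
    have : ‖C * z‖ = 1 := by rw [h1]; simp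
    rw [norm_mul, hCabs, one_mul] at this
    rw [mem_ball_zero_iff] at hz
    linarith
  have hfz : f z - 1 = z * C * (f z + 1) := by
    have hd : f z + 1 ≠ 0 := hden z hz
    have := hgz
    rw [hg_def] at this
    rw [div_eq_iff hd] at this
    exact this
  rw [eq_div_iff hCz]
  linear_combination hfz
end

section
/- Let f : 𝔻 → ℂ be holomorphic with f(0) = 1 and Re f > 0 on 𝔻, and suppose the Taylor coefficient a₁ = f'(0) satisfies |a₁| = 2. Then there exists θ ∈ ℝ such that f(z) = (1 + e^{iθ} z)/(1 - e^{iθ} z) for all z ∈ 𝔻. -/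
open Complex Metric

theorem caratheodory_equality_case_a1 (f : ℂ → ℂ)
    (hf : DifferentiableOn ℂ f (ball 0 1)) (h0 : f 0 = 1)
    (hre : ∀ z ∈ ball (0 : ℂ) 1, 0 < (f z).re)
    (ha1 : ‖deriv f 0‖ = 2) :
    ∃ θ : ℝ, ∀ z ∈ ball (0 : ℂ) 1,
      f z = (1 + Complex.exp (θ * Complex.I) * z) / (1 - Complex.exp (θ * Complex.I) * z) := by
  set g : ℂ → ℂ := fun z => (f z - 1) / (f z + 1) with hg_def
  have hne : ∀ z ∈ ball (0 : ℂ) 1, f z + 1 ≠ 0 := by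
    intro z hz h
    have := hre z hz
    have : (f z + 1).re = 0 := by rw [h]; simp
    simp only [Complex.add_re, Complex.one_re] at this
    linarith [hre z hz]
  have hgd : DifferentiableOn ℂ g (ball 0 1) := by
    exact (hf.sub (differentiableOn_const 1)).div (hf.add (differentiableOn_const 1)) hne
  have hg0 : g 0 = 0 := by simp [hg_def, h0]
  have hmaps : Set.MapsTo g (ball 0 1) (ball (g 0) 1) := by
    intro z hz
    rw [hg0]
    simp only [mem_ball, dist_zero_right]
    have h1 : ‖f z - 1‖ < ‖f z + 1‖ := by
      rw [← Real.sqrt_sq (norm_nonneg _), ← Real.sqrt_sq (norm_nonneg (f z + 1))]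
      apply Real.sqrt_lt_sqrt (sq_nonneg _)
      rw [← Complex.normSq_eq_norm_sq, ← Complex.normSq_eq_norm_sq]
      simp only [Complex.normSq_apply, Complex.sub_re, Complex.sub_im, Complex.add_re,
        Complex.add_im, Complex.one_re, Complex.one_im]
      nlinarith [hre z hz]
    have h2 : 0 < ‖f z + 1‖ := by
      rw [norm_pos_iff]; exact hne z hz
    simpa only [hg_def, norm_div] using (div_lt_one h2).mpr h1
  -- derivative of g at 0
  have hfd0 : DifferentiableAt ℂ f 0 := hf.differentiableAt (isOpen_ball.mem_nhds (by simp))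
  have hderiv : deriv g 0 = deriv f 0 / 2 := by
    have : deriv g 0 = (deriv f 0 * (f 0 + 1) - (f 0 - 1) * deriv f 0) / (f 0 + 1) ^ 2 := by
      rw [hg_def]
      rw [deriv_fun_div (hfd0.sub_const 1) (hfd0.add_const 1) (by rw [h0]; norm_num)]
      simp [deriv_sub_const, deriv_add_const]
    rw [this, h0]
    ring
  have hds : ‖dslope g 0 0‖ = 1 / 1 := by
    rw [dslope_same, hderiv, norm_div, ha1]
    norm_num
  have heq := Complex.affine_of_mapsTo_ball_of_exists_norm_dslope_eq_div hgd (hmaps.mono_right ball_subset_closedBall)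
    (by simp : (0:ℂ) ∈ ball (0:ℂ) 1) hds
  set C : ℂ := dslope g 0 0 with hC
  have hCabs : ‖C‖ = 1 := by
    have := hds; linarith
  refine ⟨Complex.arg C, fun z hz => ?_⟩
  have hCexp : Complex.exp ((Complex.arg C : ℂ) * Complex.I) = C := by
    conv_rhs => rw [← Complex.norm_mul_exp_arg_mul_I C]
    rw [hCabs]; simp
  have hgz : g z = C * z := by
    have := heq hz
    simp only [hg0, sub_zero, smul_eq_mul, zero_add] at this
    rw [this]; ring
  rw [hCexp]
  have hCz : 1 - C * z ≠ 0 := by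
    intro h
    have : ‖C * z‖ = 1 := by
      have : C * z = 1 := by linear_combination -h
      rw [this]; simp
    rw [norm_mul, hCabs, one_mul] at this
    simp only [mem_ball, dist_zero_right] at hz
    linarith
  have hfz : (f z - 1) / (f z + 1) = C * z := hgz
  rw [div_eq_iff (hne z hz)] at hfz
  rw [eq_div_iff hCz]
  linear_combination hfz
end

section
/- Let f : 𝔻 → ℂ be holomorphic and set A = sup_{z ∈ 𝔻} Re f(z) < ∞. Then for every 0 ≤ r < 1 and |z| ≤ r, Re f(z) ≤ (2r/(1+r))·A + ((1-r)/(1+r))·Re f(0). -/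
open Complex Metric

private lemma aux_re_div (w : ℂ) (r : ℝ) (hr : r < 1) (hw : ‖w‖ ≤ r) :
    (w / (1 + w)).re ≤ r / (1 + r) := by
  have hs0 : 0 ≤ ‖w‖ := norm_nonneg w
  have hx : w.re ≤ ‖w‖ := Complex.re_le_norm w
  have hx' : -‖w‖ ≤ w.re := (abs_le.1 (Complex.abs_re_le_norm w)).1
  have hn : w.re ^ 2 + w.im ^ 2 = ‖w‖ ^ 2 := by
    rw [Complex.sq_norm, Complex.normSq_apply]; ring
  have hdenpos : 0 < Complex.normSq (1 + w) := by
    rw [Complex.normSq_apply]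
    simp only [Complex.add_re, Complex.add_im, Complex.one_re, Complex.one_im, zero_add]
    nlinarith [hx', hs0, hr, hw]
  have hre : (w / (1 + w)).re = (w.re + (w.re ^ 2 + w.im ^ 2)) / Complex.normSq (1 + w) := by
    rw [Complex.div_re]
    simp only [Complex.add_re, Complex.add_im, Complex.one_re, Complex.one_im, zero_add]
    field_simp
    ring
  rw [hre, div_le_div_iff₀ hdenpos (by linarith)]
  rw [Complex.normSq_apply]
  simp only [Complex.add_re, Complex.add_im, Complex.one_re, Complex.one_im, zero_add]
  nlinarith [hx, hw, hs0, hn, hx']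

theorem borel_caratheodory_re_bound (f : ℂ → ℂ)
    (hf : DifferentiableOn ℂ f (ball 0 1)) (A : ℝ)
    (hA : IsLUB ((fun z => (f z).re) '' ball (0 : ℂ) 1) A) :
    ∀ r : ℝ, 0 ≤ r → r < 1 → ∀ z : ℂ, ‖z‖ ≤ r →
      (f z).re ≤ 2 * r / (1 + r) * A + (1 - r) / (1 + r) * (f 0).re := by
  intro r hr0 hr1 z hz
  have hz1 : z ∈ ball (0 : ℂ) 1 := by
    rw [mem_ball_zero_iff]; exact lt_of_le_of_lt hz hr1
  have hub : ∀ w ∈ ball (0 : ℂ) 1, (f w).re ≤ A := fun w hw => hA.1 ⟨w, hw, rfl⟩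
  have h0 : (0 : ℂ) ∈ ball (0 : ℂ) 1 := by simp
  set B : ℝ := A - (f 0).re with hB
  have hB0 : 0 ≤ B := by have := hub 0 h0; simp [hB]; linarith
  -- key claim with a strict bound C > B
  have key : ∀ C : ℝ, B < C → (f z).re - (f 0).re ≤ 2 * r / (1 + r) * C := by
    intro C hC
    have hCpos : 0 < C := lt_of_le_of_lt hB0 hC
    set g : ℂ → ℂ := fun w => f w - f 0 with hg
    have hgre : ∀ w ∈ ball (0 : ℂ) 1, (g w).re ≤ B := by
      intro w hw
      simp only [hg, Complex.sub_re, hB]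
      have := hub w hw; linarith
    set φ : ℂ → ℂ := fun w => g w / (2 * (C : ℂ) - g w) with hφ
    have hne : ∀ w ∈ ball (0 : ℂ) 1, 2 * (C : ℂ) - g w ≠ 0 := by
      intro w hw h
      have : (2 * (C : ℂ) - g w).re = 0 := by rw [h]; simp
      simp only [Complex.sub_re, Complex.mul_re, Complex.ofReal_re, Complex.ofReal_im] at this
      have := hgre w hw
      simp only [Complex.re_ofNat, Complex.im_ofNat] at *
      nlinarith
    have hφd : DifferentiableOn ℂ φ (ball 0 1) := by
      apply DifferentiableOn.div
      · exact hf.sub (differentiableOn_const _)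
      · exact (differentiableOn_const _).sub (hf.sub (differentiableOn_const _))
      · exact hne
    have hlt : ∀ w ∈ ball (0 : ℂ) 1, ‖g w‖ < ‖2 * (C : ℂ) - g w‖ := by
      intro w hw
      apply lt_of_pow_lt_pow_left₀ 2 (norm_nonneg _)
      rw [Complex.sq_norm, Complex.sq_norm, Complex.normSq_apply, Complex.normSq_apply]
      simp only [Complex.sub_re, Complex.sub_im, Complex.mul_re, Complex.mul_im,
        Complex.ofReal_re, Complex.ofReal_im, Complex.re_ofNat, Complex.im_ofNat]
      have h1 := hgre w hw
      nlinarith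
    have hmaps : Set.MapsTo φ (ball (0 : ℂ) 1) (ball (0 : ℂ) 1) := by
      intro w hw
      rw [mem_ball_zero_iff]
      have h1 := hlt w hw
      have h2 : 0 < ‖2 * (C : ℂ) - g w‖ :=
        lt_of_le_of_lt (norm_nonneg _) h1
      simp only [hφ, norm_div]
      rw [div_lt_one h2]
      exact h1
    have hφ0 : φ 0 = 0 := by simp [hφ, hg]
    have hschwarz : ‖φ z‖ ≤ ‖z‖ :=
      Complex.norm_le_norm_of_mapsTo_ball hφd (hmaps.mono_right ball_subset_closedBall) hφ0
        (by rwa [mem_ball_zero_iff] at hz1)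
    have hφr : ‖φ z‖ ≤ r := hschwarz.trans hz
    have h1φ : (1 : ℂ) + φ z ≠ 0 := by
      intro h
      have : ‖φ z‖ = 1 := by
        have : φ z = -1 := by linear_combination h
        rw [this]; simp
      rw [this] at hφr; linarith
    have hmul : φ z * (2 * (C : ℂ) - g z) = g z := div_mul_cancel₀ _ (hne z hz1)
    have hgz : g z = ((2 * C : ℝ) : ℂ) * (φ z / (1 + φ z)) := by
      rw [mul_div_assoc', eq_div_iff h1φ]
      push_cast
      linear_combination -hmul
    have hre : (g z).re = 2 * C * (φ z / (1 + φ z)).re := by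
      rw [hgz, Complex.re_ofReal_mul]
    have := aux_re_div (φ z) r hr1 hφr
    have hfin : (g z).re ≤ 2 * C * (r / (1 + r)) := by
      rw [hre]
      apply mul_le_mul_of_nonneg_left this (by linarith)
    simp only [hg, Complex.sub_re] at hfin
    calc (f z).re - (f 0).re ≤ 2 * C * (r / (1 + r)) := hfin
      _ = 2 * r / (1 + r) * C := by ring
  -- pass to the limit
  have hfin : (f z).re - (f 0).re ≤ 2 * r / (1 + r) * B := by
    by_contra h
    push_neg at h
    set c := 2 * r / (1 + r) with hc
    have hc0 : 0 ≤ c := by positivity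
    have hε : 0 < ((f z).re - (f 0).re - c * B) / (c + 1) := by
      apply div_pos (by linarith) (by linarith)
    have := key (B + ((f z).re - (f 0).re - c * B) / (c + 1)) (by linarith)
    rw [mul_add] at this
    have hle : c * (((f z).re - (f 0).re - c * B) / (c + 1)) <
        (f z).re - (f 0).re - c * B := by
      rw [mul_div_assoc'] at *
      rw [div_lt_iff₀ (by linarith)]
      nlinarith
    linarith
  have : 2 * r / (1 + r) * A + (1 - r) / (1 + r) * (f 0).re
      = (f 0).re + 2 * r / (1 + r) * B := by
    rw [hB]; field_simp; ring
  rw [this]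
  linarith
end

section
/- Let f : 𝔻 → ℂ be holomorphic with f(0) = 1 and Re f > 0 on 𝔻, and fix n₀ ≥ 1. Then the function φ(w) = ∑_{m≥0} a_{m n₀} w^m (where aₙ are the Taylor coefficients of f, a₀ = 1) is holomorphic on 𝔻, satisfies φ(0) = 1, and Re φ(w) > 0 for all w ∈ 𝔻. -/
open Complex Metric
open scoped NNReal ENNReal

theorem coeff_extraction_positive_re (f : ℂ → ℂ)
    (hf : DifferentiableOn ℂ f (ball 0 1)) (h0 : f 0 = 1)
    (hre : ∀ z ∈ ball (0 : ℂ) 1, 0 < (f z).re)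
    (a : ℕ → ℂ) (ha : ∀ n, a n = iteratedDeriv n f 0 / (n.factorial : ℂ))
    (n₀ : ℕ) (hn₀ : 1 ≤ n₀)
    (φ : ℂ → ℂ) (hφ : ∀ w, φ w = ∑' m : ℕ, a (m * n₀) * w ^ m) :
    DifferentiableOn ℂ φ (ball 0 1) ∧ φ 0 = 1 ∧
    ∀ w ∈ ball (0 : ℂ) 1, 0 < (φ w).re := by
  -- power series of f at 0 on closedBall of radius r < 1
  have hps : ∀ r : ℝ≥0, 0 < r → (r : ℝ) < 1 →
      HasFPowerSeriesOnBall f (cauchyPowerSeries f 0 r) 0 r := by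
    intro r hr hr1
    exact (hf.mono (closedBall_subset_ball (by simpa using hr1))).hasFPowerSeriesOnBall hr
  -- the cauchy coefficients are `a n`
  have hcoeff : ∀ r : ℝ≥0, 0 < r → (r : ℝ) < 1 → ∀ (n : ℕ) (z : ℂ),
      cauchyPowerSeries f 0 r n (fun _ => z) = a n * z ^ n := by
    intro r hr hr1 n z
    have h1 := (hps r hr hr1).factorial_smul z n
    rw [iteratedFDeriv_apply_eq_iteratedDeriv_mul_prod] at h1
    simp only [Finset.prod_const, Finset.card_univ, Fintype.card_fin, smul_eq_mul,
      nsmul_eq_mul] at h1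
    have hfac : (n.factorial : ℂ) ≠ 0 := Nat.cast_ne_zero.mpr n.factorial_ne_zero
    rw [ha]
    have h2 : cauchyPowerSeries f 0 r n (fun _ => z)
        = (z ^ n * iteratedDeriv n f 0) / (n.factorial : ℂ) := by
      rw [eq_div_iff hfac, mul_comm, h1]
    rw [h2]; ring
  -- f equals its power series on the unit ball
  have hsumf : ∀ z ∈ ball (0 : ℂ) 1, HasSum (fun n => a n * z ^ n) (f z) := by
    intro z hz
    rw [mem_ball_zero_iff] at hz
    obtain ⟨r, hzr, hr1⟩ := exists_between hz
    have hr0 : (0 : ℝ) < r := lt_of_le_of_lt (norm_nonneg z) hzr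
    set R : ℝ≥0 := ⟨r, hr0.le⟩
    have h := (hps R (by exact_mod_cast hr0) (by exact_mod_cast hr1)).hasSum
      (y := z) (by simp; exact hzr)
    simp only [zero_add] at h
    have := hcoeff R (by exact_mod_cast hr0) (by exact_mod_cast hr1)
    simpa only [this] using h
  have hn₀' : n₀ ≠ 0 := by omega
  -- bound on coefficients
  have hbound : ∀ s : ℝ≥0, (s : ℝ) < 1 → ∃ C, ∀ n, ‖a n‖ * (s : ℝ) ^ n ≤ C := by
    intro s hs
    obtain ⟨r, hsr, hr1⟩ := exists_between hs
    have hr0 : (0 : ℝ) < r := lt_of_le_of_lt s.coe_nonneg hsr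
    set R : ℝ≥0 := ⟨r, hr0.le⟩
    have h := hps R (by exact_mod_cast hr0) (by exact_mod_cast hr1)
    have hrad : (s : ℝ≥0∞) < (cauchyPowerSeries f 0 R).radius :=
      lt_of_lt_of_le (by exact_mod_cast hsr) h.r_le
    obtain ⟨C, _, hC⟩ := (cauchyPowerSeries f 0 R).norm_mul_pow_le_of_lt_radius hrad
    refine ⟨C, fun n => le_trans ?_ (hC n)⟩
    have h1 : a n = cauchyPowerSeries f 0 R n (fun _ => 1) := by
      rw [hcoeff R (by exact_mod_cast hr0) (by exact_mod_cast hr1) n 1]; simp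
    have h2 : ‖a n‖ ≤ ‖cauchyPowerSeries f 0 R n‖ := by
      rw [h1]
      calc ‖cauchyPowerSeries f 0 R n (fun _ => 1)‖
          ≤ ‖cauchyPowerSeries f 0 R n‖ * ∏ _i : Fin n, ‖(1 : ℂ)‖ :=
            (cauchyPowerSeries f 0 R n).le_opNorm _
        _ = ‖cauchyPowerSeries f 0 R n‖ := by simp
    exact mul_le_mul_of_nonneg_right h2 (by positivity)
  -- the extracted series
  set q : FormalMultilinearSeries ℂ ℂ ℂ :=
    FormalMultilinearSeries.ofScalars ℂ (fun m => a (m * n₀)) with hq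
  have hqnorm : ∀ m, ‖q m‖ = ‖a (m * n₀)‖ := fun m =>
    FormalMultilinearSeries.ofScalars_norm _ _ m
  have hqrad : 1 ≤ q.radius := by
    refine ENNReal.le_of_forall_nnreal_lt (fun s hs => ?_)
    have hs1 : (s : ℝ) < 1 := by exact_mod_cast hs
    set t : ℝ≥0 := s ^ ((n₀ : ℝ)⁻¹) with ht
    have htpow : t ^ n₀ = s := by
      rw [ht, ← NNReal.rpow_natCast (s ^ ((n₀ : ℝ)⁻¹)) n₀, ← NNReal.rpow_mul,
        inv_mul_cancel₀ (by exact_mod_cast hn₀'), NNReal.rpow_one]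
    have ht1 : (t : ℝ) < 1 := by
      have h2 : t ^ n₀ < 1 ^ n₀ := by rw [htpow, one_pow]; exact_mod_cast hs1
      exact_mod_cast lt_of_pow_lt_pow_left₀ n₀ zero_le_one h2
    obtain ⟨C, hC⟩ := hbound t ht1
    apply q.le_radius_of_bound C
    intro m
    rw [hqnorm m]
    calc ‖a (m * n₀)‖ * (s : ℝ) ^ m = ‖a (m * n₀)‖ * (t : ℝ) ^ (m * n₀) := by
          have hst : (s : ℝ) = (t : ℝ) ^ n₀ := by exact_mod_cast htpow.symm
          rw [hst, ← pow_mul']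
      _ ≤ C := hC _
  -- roots
  have hroot : ∀ w ∈ ball (0 : ℂ) 1, ∃ z : ℂ, z ^ n₀ = w ∧ ‖z‖ < 1 := by
    intro w hw
    obtain ⟨z, hz⟩ := IsAlgClosed.exists_pow_nat_eq w (by omega : 0 < n₀)
    refine ⟨z, hz, ?_⟩
    rw [mem_ball_zero_iff] at hw
    have h1 : ‖z‖ ^ n₀ < 1 ^ n₀ := by rw [← norm_pow, hz, one_pow]; exact hw
    exact lt_of_pow_lt_pow_left₀ n₀ zero_le_one h1
  -- summability of the extracted series
  have hinj : Function.Injective (fun m : ℕ => m * n₀) := fun m m' h =>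
    Nat.eq_of_mul_eq_mul_right (by omega) h
  have hasSum_phi : ∀ w ∈ ball (0 : ℂ) 1, HasSum (fun m => a (m * n₀) * w ^ m) (φ w) := by
    intro w hw
    obtain ⟨z, hzw, hz1⟩ := hroot w hw
    have hs := (hsumf z (mem_ball_zero_iff.mpr hz1)).summable
    have hs2 := hs.comp_injective hinj
    have he : ((fun n => a n * z ^ n) ∘ fun m : ℕ => m * n₀)
        = fun m => a (m * n₀) * w ^ m := by
      funext m
      simp only [Function.comp_apply]
      rw [pow_mul', hzw]
    rw [he] at hs2
    rw [hφ w]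
    exact hs2.hasSum
  -- power series for φ
  have hφball : HasFPowerSeriesOnBall φ q 0 1 := by
    refine ⟨hqrad, zero_lt_one, fun {y} hy => ?_⟩
    have hy' : y ∈ ball (0 : ℂ) 1 := by
      rw [mem_ball_zero_iff]
      simpa [← ofReal_norm, ENNReal.ofReal_lt_one] using hy
    have h1 := hasSum_phi y hy'
    rw [zero_add]
    convert h1 using 2 with m
    · rfl
    rw [hq, FormalMultilinearSeries.ofScalars_apply_eq, smul_eq_mul]
  have hdiff : DifferentiableOn ℂ φ (ball 0 1) := by
    have h1 := hφball.differentiableOn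
    rwa [show (1 : ℝ≥0∞) = ((1 : ℝ≥0) : ℝ≥0∞) by simp, Metric.emetric_ball_nnreal,
      NNReal.coe_one] at h1
  -- φ 0 = 1
  have hφ0 : φ 0 = 1 := by
    rw [hφ 0, tsum_eq_single 0 (fun m hm => by simp [zero_pow hm])]
    simp [ha, h0]
  refine ⟨hdiff, hφ0, ?_⟩
  -- positivity
  intro w hw
  obtain ⟨z, hzw, hz1⟩ := hroot w hw
  set ζ : ℂ := Complex.exp (2 * Real.pi * Complex.I / n₀) with hζdef
  have hζ : IsPrimitiveRoot ζ n₀ := Complex.isPrimitiveRoot_exp n₀ hn₀'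
  have hζnorm : ‖ζ‖ = 1 := by
    have h2 : ‖ζ‖ ^ n₀ = 1 := by rw [← norm_pow, hζ.pow_eq_one, norm_one]
    exact le_antisymm ((pow_le_one_iff_of_nonneg (norm_nonneg ζ) hn₀').mp h2.le)
      ((one_le_pow_iff_of_nonneg (norm_nonneg ζ) hn₀').mp h2.ge)
  have hζabs : ∀ k : ℕ, ‖ζ ^ k * z‖ < 1 := by
    intro k
    rw [norm_mul, norm_pow, hζnorm, one_pow, one_mul]
    exact hz1
  -- roots of unity filtering sum
  have hru : ∀ n : ℕ, ∑ k ∈ Finset.range n₀, (ζ ^ n) ^ k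
      = if n₀ ∣ n then (n₀ : ℂ) else 0 := by
    intro n
    by_cases h : n₀ ∣ n
    · rw [if_pos h, (hζ.pow_eq_one_iff_dvd n).mpr h]
      simp
    · rw [if_neg h]
      have hne : ζ ^ n ≠ 1 := fun hc => h ((hζ.pow_eq_one_iff_dvd n).mp hc)
      rw [geom_sum_eq hne]
      have h3 : (ζ ^ n) ^ n₀ = 1 := by
        rw [← pow_mul, mul_comm, pow_mul, hζ.pow_eq_one, one_pow]
      rw [h3]
      simp
  have hsum1 : HasSum (fun n => a n * z ^ n * (if n₀ ∣ n then (n₀ : ℂ) else 0))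
      (∑ k ∈ Finset.range n₀, f (ζ ^ k * z)) := by
    have h1 : ∀ k ∈ Finset.range n₀, HasSum (fun n => a n * (ζ ^ k * z) ^ n) (f (ζ ^ k * z)) :=
      fun k _ => hsumf _ (mem_ball_zero_iff.mpr (hζabs k))
    have h2 := hasSum_sum h1
    convert h2 using 1
    funext n
    rw [← hru n, Finset.mul_sum]
    exact Finset.sum_congr rfl fun k _ => by ring
  have hsum2 : HasSum ((fun n => a n * z ^ n * (if n₀ ∣ n then (n₀ : ℂ) else 0))
      ∘ fun m : ℕ => m * n₀) ((n₀ : ℂ) * φ w) := by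
    have h1 := (hasSum_phi w hw).mul_left (n₀ : ℂ)
    convert h1 using 1
    · rfl
    funext m
    simp only [Function.comp_apply]
    rw [if_pos (dvd_mul_left n₀ m), pow_mul', hzw]
    ring
  have hsupp : ∀ x ∉ Set.range (fun m : ℕ => m * n₀),
      a x * z ^ x * (if n₀ ∣ x then (n₀ : ℂ) else 0) = 0 := by
    intro x hx
    rw [if_neg, mul_zero]
    intro hdvd
    obtain ⟨m, rfl⟩ := hdvd
    exact hx ⟨m, mul_comm m n₀⟩
  have hsum3 : HasSum (fun n => a n * z ^ n * (if n₀ ∣ n then (n₀ : ℂ) else 0))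
      ((n₀ : ℂ) * φ w) := (hinj.hasSum_iff hsupp).mp hsum2
  have hkey : (n₀ : ℂ) * φ w = ∑ k ∈ Finset.range n₀, f (ζ ^ k * z) := hsum3.unique hsum1
  have hrepos : 0 < ((n₀ : ℂ) * φ w).re := by
    rw [hkey, Complex.re_sum]
    refine Finset.sum_pos (fun k _ => hre _ (mem_ball_zero_iff.mpr (hζabs k))) ?_
    exact ⟨0, Finset.mem_range.mpr (by omega)⟩
  have hmulre : ((n₀ : ℂ) * φ w).re = (n₀ : ℝ) * (φ w).re := by
    simp [Complex.mul_re]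
  rw [hmulre] at hrepos
  have hn0R : (0 : ℝ) < (n₀ : ℝ) := by exact_mod_cast (by omega : 0 < n₀)
  nlinarith
end

section
/- Let f : 𝔻 → ℂ be holomorphic with f(0) = 0 and Re f(z) < A on 𝔻 for some A > 0. Then for every z ∈ 𝔻, Re f(z) ≤ 2A·|z|/(1 + |z|). -/
open Complex Metric

theorem borel_caratheodory_re_pointwise (f : ℂ → ℂ)
    (hf : DifferentiableOn ℂ f (ball 0 1)) (h0 : f 0 = 0)
    (A : ℝ) (hApos : 0 < A)
    (hre : ∀ z ∈ ball (0 : ℂ) 1, (f z).re < A) :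
    ∀ z ∈ ball (0 : ℂ) 1,
      (f z).re ≤ 2 * A * ‖z‖ / (1 + ‖z‖) := by
  set g : ℂ → ℂ := fun z => f z / (2 * A - f z) with hg_def
  have hden : ∀ z ∈ ball (0 : ℂ) 1, (2 * (A : ℂ) - f z) ≠ 0 := by
    intro z hz h
    have := hre z hz
    have hre0 : ((2 * (A : ℂ) - f z)).re = 0 := by rw [h]; simp
    simp only [Complex.sub_re, Complex.mul_re, Complex.re_ofNat, Complex.im_ofNat,
      Complex.ofReal_re, Complex.ofReal_im] at hre0
    nlinarith
  have hlt : ∀ z ∈ ball (0 : ℂ) 1, ‖f z‖ < ‖2 * A - f z‖ := by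
    intro z hz
    have hx := hre z hz
    have h1 : ‖f z‖ ^ 2 < ‖2 * A - f z‖ ^ 2 := by
      rw [Complex.sq_norm, Complex.sq_norm, Complex.normSq_apply, Complex.normSq_apply]
      simp only [Complex.sub_re, Complex.sub_im, Complex.mul_re, Complex.mul_im,
        Complex.re_ofNat, Complex.im_ofNat, Complex.ofReal_re, Complex.ofReal_im]
      nlinarith [hx]
    exact lt_of_pow_lt_pow_left₀ 2 (norm_nonneg _) h1
  have hgd : DifferentiableOn ℂ g (ball 0 1) :=
    hf.div ((differentiableOn_const _).sub hf) hden
  have hg0 : g 0 = 0 := by simp [hg_def, h0]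
  have hmaps : Set.MapsTo g (ball 0 1) (ball 0 1) := by
    intro z hz
    rw [mem_ball_zero_iff]
    have h2 := hlt z hz
    rw [hg_def]
    simp only [norm_div]
    rw [div_lt_one (lt_of_le_of_lt (norm_nonneg _) h2)]
    exact h2
  intro z hz
  have hzr : ‖z‖ < 1 := mem_ball_zero_iff.mp hz
  have hschwarz : ‖g z‖ ≤ ‖z‖ :=
    Complex.norm_le_norm_of_mapsTo_ball hgd (hmaps.mono_right ball_subset_closedBall) hg0 hzr
  -- translate back
  set r := ‖z‖ with hr
  have hr0 : 0 ≤ r := norm_nonneg z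
  set x := (f z).re
  set y := (f z).im
  have hx : x < A := hre z hz
  -- |f z| ≤ r * |2A - f z|
  have key : ‖f z‖ ≤ r * ‖2 * A - f z‖ := by
    have hd := hden z hz
    have : ‖f z‖ / ‖2 * A - f z‖ ≤ r := by
      simpa [hg_def, norm_div] using hschwarz
    rwa [div_le_iff₀ (norm_pos_iff.mpr hd)] at this
  have key2 : x ^ 2 + y ^ 2 ≤ r ^ 2 * ((2 * A - x) ^ 2 + y ^ 2) := by
    have h1 : ‖f z‖ ^ 2 ≤ (r * ‖2 * A - f z‖) ^ 2 := by
      exact pow_le_pow_left₀ (norm_nonneg _) key 2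
    rw [mul_pow, Complex.sq_norm (f z), Complex.sq_norm (2 * A - f z),
      Complex.normSq_apply, Complex.normSq_apply] at h1
    simpa [Complex.sub_re, Complex.sub_im, Complex.mul_re, Complex.mul_im, x, y, sq] using h1
  rw [le_div_iff₀ (by linarith : (0:ℝ) < 1 + r)]
  rcases le_or_gt x 0 with h | h
  · nlinarith
  · by_contra hc
    push_neg at hc
    have h1 : 0 < x * (1 - r) + 2 * A * r := by nlinarith
    have h2 : 0 < (x * (1 + r) - 2 * A * r) * (x * (1 - r) + 2 * A * r) :=
      mul_pos (by linarith) h1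
    nlinarith [mul_nonneg (sq_nonneg y) (by nlinarith : (0:ℝ) ≤ 1 - r ^ 2)]
end
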